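/- Let δ ∈ {1, −1} and let u : ℝ × ℝ → ℝ be sufficiently smooth, positive, and satisfy the semilinear equation u_t = u_xx + δ·u·ln u at every point. Then for every real ε, the function v(t,x) := u(t, x − 2ε e^{δt}) · exp(−δε e^{δt} x + δε² e^{2δt}) is positive and also satisfies v_t = v_xx + δ·v·ln v at every point. (This is the finite transformation generated by the symmetry X₃ = 2e^{δt} ∂x − δ e^{δt} x u ∂u.) -/

import Mathlib

noncomputable section

/-- Partial derivative with respect to the first variable (time). -/
def pdT (f : ℝ × ℝ → ℝ) (t x : ℝ) : ℝ := deriv (fun s => f (s, x)) t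

/-- Partial derivative with respect to the second variable (space). -/
def pdX (f : ℝ × ℝ → ℝ) (t x : ℝ) : ℝ := deriv (fun y => f (t, y)) x

/-- Value of a CLM on `ℝ × ℝ` in terms of its values on basis vectors. -/
lemma clm_pair (L : ℝ × ℝ →L[ℝ] ℝ) (a b : ℝ) :
    L (a, b) = a * L (1, 0) + b * L (0, 1) := by
  have h : ((a, b) : ℝ × ℝ) = a • ((1 : ℝ), (0 : ℝ)) + b • ((0 : ℝ), (1 : ℝ)) := by
    simp [Prod.ext_iff]
  rw [h, map_add, map_smul, map_smul, smul_eq_mul, smul_eq_mul]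

lemma curveX (t x c : ℝ) :
    HasDerivAt (fun y : ℝ => ((t, y - c) : ℝ × ℝ)) ((0 : ℝ), (1 : ℝ)) x := by
  have h1 : HasDerivAt (fun y : ℝ => y - c) 1 x := (hasDerivAt_id x).sub_const c
  exact (hasDerivAt_const x t).prodMk h1

lemma sliceX {f : ℝ × ℝ → ℝ} (hf : Differentiable ℝ f) (t x c : ℝ) :
    HasDerivAt (fun y => f (t, y - c)) (fderiv ℝ f (t, x - c) (0, 1)) x :=
  (hf (t, x - c)).hasFDerivAt.comp_hasDerivAt x (curveX t x c)

lemma sliceX0 {f : ℝ × ℝ → ℝ} (hf : Differentiable ℝ f) (t x : ℝ) :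
    HasDerivAt (fun y => f (t, y)) (fderiv ℝ f (t, x) (0, 1)) x := by
  have h1 : HasDerivAt (fun y : ℝ => ((t, y) : ℝ × ℝ)) ((0 : ℝ), (1 : ℝ)) x :=
    (hasDerivAt_const x t).prodMk (hasDerivAt_id x)
  exact (hf (t, x)).hasFDerivAt.comp_hasDerivAt x h1

lemma sliceT {f : ℝ × ℝ → ℝ} (hf : Differentiable ℝ f) (t x : ℝ) :
    HasDerivAt (fun s => f (s, x)) (fderiv ℝ f (t, x) (1, 0)) t := by
  have h1 : HasDerivAt (fun s : ℝ => ((s, x) : ℝ × ℝ)) ((1 : ℝ), (0 : ℝ)) t :=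
    (hasDerivAt_id t).prodMk (hasDerivAt_const t x)
  exact (hf (t, x)).hasFDerivAt.comp_hasDerivAt t h1

/-- the finite transformation generated by
`X₃ = 2e^{δt} ∂x − δ e^{δt} x u ∂u` maps positive solutions of
`u_t = u_xx + δ u ln u` to positive solutions. -/
theorem symmetry_X3_log_source
    (δ : ℝ) (hδ : δ = 1 ∨ δ = -1)
    (u : ℝ × ℝ → ℝ) (hupos : ∀ p, 0 < u p) (hu : ContDiff ℝ 2 u)
    (heq : ∀ t x : ℝ,
      pdT u t x = deriv (fun y => pdX u t y) x +
        δ * u (t, x) * Real.log (u (t, x))) :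
    ∀ ε : ℝ,
      (∀ p : ℝ × ℝ, 0 < u (p.1, p.2 - 2 * ε * Real.exp (δ * p.1)) *
        Real.exp (-δ * ε * Real.exp (δ * p.1) * p.2 +
          δ * ε ^ 2 * Real.exp (2 * δ * p.1))) ∧
      (∀ t x : ℝ,
        pdT (fun p => u (p.1, p.2 - 2 * ε * Real.exp (δ * p.1)) *
            Real.exp (-δ * ε * Real.exp (δ * p.1) * p.2 +
              δ * ε ^ 2 * Real.exp (2 * δ * p.1))) t x =
          deriv (fun y =>
            pdX (fun p => u (p.1, p.2 - 2 * ε * Real.exp (δ * p.1)) *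
              Real.exp (-δ * ε * Real.exp (δ * p.1) * p.2 +
                δ * ε ^ 2 * Real.exp (2 * δ * p.1))) t y) x +
          δ * ((fun p : ℝ × ℝ => u (p.1, p.2 - 2 * ε * Real.exp (δ * p.1)) *
              Real.exp (-δ * ε * Real.exp (δ * p.1) * p.2 +
                δ * ε ^ 2 * Real.exp (2 * δ * p.1))) (t, x)) *
            Real.log ((fun p : ℝ × ℝ => u (p.1, p.2 - 2 * ε * Real.exp (δ * p.1)) *
              Real.exp (-δ * ε * Real.exp (δ * p.1) * p.2 +
                δ * ε ^ 2 * Real.exp (2 * δ * p.1))) (t, x))) := by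
  -- basic differentiability facts
  have hud : Differentiable ℝ u := hu.differentiable (by norm_num)
  have huX : Differentiable ℝ (fun p : ℝ × ℝ => fderiv ℝ u p (0, 1)) := by
    have h1 : ContDiff ℝ 1 (fderiv ℝ u) := hu.fderiv_right (by norm_num)
    exact (h1.clm_apply contDiff_const).differentiable (by norm_num)
  -- the PDE in terms of `fderiv`
  have heq' : ∀ a b : ℝ,
      fderiv ℝ u (a, b) (1, 0) =
        fderiv ℝ (fun p : ℝ × ℝ => fderiv ℝ u p (0, 1)) (a, b) (0, 1) +
          δ * u (a, b) * Real.log (u (a, b)) := by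
    intro a b
    have h1 := (sliceT hud a b).deriv
    have h2 : (fun y => pdX u a y) = fun y => fderiv ℝ u (a, y) (0, 1) :=
      funext fun y => (sliceX0 hud a y).deriv
    have h3 := (sliceX0 huX a b).deriv
    have h4 := heq a b
    simp only [pdT] at h4
    rw [h1, h2, h3] at h4
    exact h4
  intro ε
  refine ⟨fun p => mul_pos (hupos _) (Real.exp_pos _), fun t x => ?_⟩
  simp only [pdT, pdX]
  -- notation
  have hA := Real.exp_pos (δ * t)
  -- time derivative of the transformed function
  have hlin : HasDerivAt (fun s : ℝ => δ * s) δ t := by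
    simpa using (hasDerivAt_id t).const_mul δ
  have hE : HasDerivAt (fun s => Real.exp (δ * s)) (δ * Real.exp (δ * t)) t := by
    have := hlin.exp; rwa [mul_comm] at this
  have hlin2 : HasDerivAt (fun s : ℝ => 2 * δ * s) (2 * δ) t := by
    simpa using (hasDerivAt_id t).const_mul (2 * δ)
  have hE2 : HasDerivAt (fun s => Real.exp (2 * δ * s)) (2 * δ * Real.exp (2 * δ * t)) t := by
    have h := hlin2.exp
    convert h using 1
    ring
  have hshift : HasDerivAt (fun s => x - 2 * ε * Real.exp (δ * s))
      (-(2 * ε * (δ * Real.exp (δ * t)))) t := (hE.const_mul (2 * ε)).const_sub x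
  have hcurve : HasDerivAt (fun s => ((s, x - 2 * ε * Real.exp (δ * s)) : ℝ × ℝ))
      ((1 : ℝ), -(2 * ε * (δ * Real.exp (δ * t)))) t := (hasDerivAt_id t).prodMk hshift
  have huT : HasDerivAt (fun s => u (s, x - 2 * ε * Real.exp (δ * s)))
      (fderiv ℝ u (t, x - 2 * ε * Real.exp (δ * t)) (1, 0) -
        2 * ε * δ * Real.exp (δ * t) *
          fderiv ℝ u (t, x - 2 * ε * Real.exp (δ * t)) (0, 1)) t := by
    have h := (hud (t, x - 2 * ε * Real.exp (δ * t))).hasFDerivAt.comp_hasDerivAt t hcurve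
    refine h.congr_deriv ?_
    conv_lhs => rw [clm_pair]
    ring
  have hgT : HasDerivAt
      (fun s => -δ * ε * Real.exp (δ * s) * x + δ * ε ^ 2 * Real.exp (2 * δ * s))
      (-δ * ε * (δ * Real.exp (δ * t)) * x + δ * ε ^ 2 * (2 * δ * Real.exp (2 * δ * t))) t :=
    ((hE.const_mul (-δ * ε)).mul_const x).add (hE2.const_mul (δ * ε ^ 2))
  have hEgT : HasDerivAt
      (fun s => Real.exp (-δ * ε * Real.exp (δ * s) * x + δ * ε ^ 2 * Real.exp (2 * δ * s)))
      (Real.exp (-δ * ε * Real.exp (δ * t) * x + δ * ε ^ 2 * Real.exp (2 * δ * t)) *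
        (-δ * ε * (δ * Real.exp (δ * t)) * x + δ * ε ^ 2 * (2 * δ * Real.exp (2 * δ * t)))) t :=
    hgT.exp
  have hvT := huT.fun_mul hEgT
  rw [hvT.deriv]
  -- first space derivative, at every point y
  have hDX : ∀ y : ℝ,
      HasDerivAt (fun y' => u (t, y' - 2 * ε * Real.exp (δ * t)) *
          Real.exp (-δ * ε * Real.exp (δ * t) * y' + δ * ε ^ 2 * Real.exp (2 * δ * t)))
        (fderiv ℝ u (t, y - 2 * ε * Real.exp (δ * t)) (0, 1) *
            Real.exp (-δ * ε * Real.exp (δ * t) * y + δ * ε ^ 2 * Real.exp (2 * δ * t)) +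
          u (t, y - 2 * ε * Real.exp (δ * t)) *
            (Real.exp (-δ * ε * Real.exp (δ * t) * y + δ * ε ^ 2 * Real.exp (2 * δ * t)) *
              (-δ * ε * Real.exp (δ * t)))) y := by
    intro y
    have h1 := sliceX hud t y (2 * ε * Real.exp (δ * t))
    have h2 : HasDerivAt
        (fun y' : ℝ => -δ * ε * Real.exp (δ * t) * y' + δ * ε ^ 2 * Real.exp (2 * δ * t))
        (-δ * ε * Real.exp (δ * t)) y := by
      simpa using (((hasDerivAt_id y).const_mul (-δ * ε * Real.exp (δ * t))).add_const
        (δ * ε ^ 2 * Real.exp (2 * δ * t)))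
    exact h1.mul h2.exp
  have hfunX : (fun y => deriv (fun y' => u (t, y' - 2 * ε * Real.exp (δ * t)) *
        Real.exp (-δ * ε * Real.exp (δ * t) * y' + δ * ε ^ 2 * Real.exp (2 * δ * t))) y) =
      fun y => fderiv ℝ u (t, y - 2 * ε * Real.exp (δ * t)) (0, 1) *
            Real.exp (-δ * ε * Real.exp (δ * t) * y + δ * ε ^ 2 * Real.exp (2 * δ * t)) +
          u (t, y - 2 * ε * Real.exp (δ * t)) *
            (Real.exp (-δ * ε * Real.exp (δ * t) * y + δ * ε ^ 2 * Real.exp (2 * δ * t)) *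
              (-δ * ε * Real.exp (δ * t))) :=
    funext fun y => (hDX y).deriv
  rw [hfunX]
  -- second space derivative
  have hux : ∀ y : ℝ, HasDerivAt
      (fun y' => fderiv ℝ u (t, y' - 2 * ε * Real.exp (δ * t)) (0, 1))
      (fderiv ℝ (fun p : ℝ × ℝ => fderiv ℝ u p (0, 1))
        (t, y - 2 * ε * Real.exp (δ * t)) (0, 1)) y :=
    fun y => sliceX huX t y (2 * ε * Real.exp (δ * t))
  have hEx : HasDerivAt
      (fun y' : ℝ => Real.exp (-δ * ε * Real.exp (δ * t) * y' + δ * ε ^ 2 * Real.exp (2 * δ * t)))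
      (Real.exp (-δ * ε * Real.exp (δ * t) * x + δ * ε ^ 2 * Real.exp (2 * δ * t)) *
        (-δ * ε * Real.exp (δ * t))) x := by
    have h2 : HasDerivAt
        (fun y' : ℝ => -δ * ε * Real.exp (δ * t) * y' + δ * ε ^ 2 * Real.exp (2 * δ * t))
        (-δ * ε * Real.exp (δ * t)) x := by
      simpa using (((hasDerivAt_id x).const_mul (-δ * ε * Real.exp (δ * t))).add_const
        (δ * ε ^ 2 * Real.exp (2 * δ * t)))
    exact h2.exp
  have hXX := (((hux x).fun_mul hEx).fun_add
    ((sliceX hud t x (2 * ε * Real.exp (δ * t))).fun_mul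
      (hEx.mul_const (-δ * ε * Real.exp (δ * t)))))
  rw [hXX.deriv]
  -- now pure algebra
  have hlog : Real.log (u (t, x - 2 * ε * Real.exp (δ * t)) *
      Real.exp (-δ * ε * Real.exp (δ * t) * x + δ * ε ^ 2 * Real.exp (2 * δ * t))) =
      Real.log (u (t, x - 2 * ε * Real.exp (δ * t))) +
        (-δ * ε * Real.exp (δ * t) * x + δ * ε ^ 2 * Real.exp (2 * δ * t)) := by
    rw [Real.log_mul (hupos _).ne' (Real.exp_ne_zero _), Real.log_exp]
  rw [hlog, heq' t (x - 2 * ε * Real.exp (δ * t))]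
  have hexp2 : Real.exp (2 * δ * t) = Real.exp (δ * t) * Real.exp (δ * t) := by
    rw [← Real.exp_add]; ring_nf
  rw [hexp2]
  ring
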